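/- Assume the Bethe equations hold. Then for every complex number z with z ∉ {μ_1, …, μ_M} ∪ {ε_1, …, ε_n}, the function S satisfies the Riccati equation: −Σ_{i=1}^M 1/(z − μ_i)² + S(z)² + (2/(ħ g²))((2z − ω)S(z) − 2M) = Σ_{j=1}^n 2 s_j (S(z) − S(ε_j))/(z − ε_j). (Here −Σ_i 1/(z − μ_i)² is the derivative S′(z).) -/

import Mathlib

open BigOperators Finset

/-- Swapping the two indices in an off-diagonal double sum. -/
lemma sum_erase_comm {M : ℕ} (f : Fin M → Fin M → ℂ) :
    ∑ i, ∑ k ∈ Finset.univ.erase i, f i k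
      = ∑ i, ∑ k ∈ Finset.univ.erase i, f k i := by
  have key : ∀ g : Fin M → Fin M → ℂ,
      ∑ i, ∑ k ∈ Finset.univ.erase i, g i k
        = ∑ i, ∑ k, if k = i then 0 else g i k := by
    intro g
    refine Finset.sum_congr rfl fun i _ => ?_
    rw [← Finset.sum_erase (f := fun k => if k = i then 0 else g i k) (a := i) _
      (by simp)]
    refine Finset.sum_congr rfl fun k hk => ?_
    rw [if_neg (Finset.mem_erase.mp hk).1]
  rw [key, key, Finset.sum_comm]
  exact Finset.sum_congr rfl fun k _ => Finset.sum_congr rfl fun i _ => by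
    simp [eq_comm]

/-- The Bethe equations imply the Riccati equation for
`S(z) = Σ_i 1/(z - μ_i)`. -/
theorem riccati_from_bethe
    (n M : ℕ) (hbar g ω : ℂ) (hhbar : hbar ≠ 0) (hg : g ≠ 0)
    (ε : Fin n → ℂ) (hε : Function.Injective ε) (s : Fin n → ℂ)
    (μ : Fin M → ℂ) (hμ : Function.Injective μ)
    (hμε : ∀ i j, μ i ≠ ε j)
    (a S : ℂ → ℂ)
    (ha : ∀ z, a z = (2 * z - ω) / g ^ 2 - ∑ j, hbar * s j / (z - ε j))
    (hS : ∀ z, S z = ∑ i, 1 / (z - μ i))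
    (bethe : ∀ i, a (μ i) + ∑ k ∈ Finset.univ.erase i, hbar / (μ i - μ k) = 0)
    (z : ℂ) (hzμ : ∀ i, z ≠ μ i) (hzε : ∀ j, z ≠ ε j) :
    -∑ i, 1 / (z - μ i) ^ 2 + (S z) ^ 2
        + (2 / (hbar * g ^ 2)) * ((2 * z - ω) * S z - 2 * M)
      = ∑ j, 2 * s j * (S z - S (ε j)) / (z - ε j) := by
  have hzμ' : ∀ i, z - μ i ≠ 0 := fun i => sub_ne_zero.mpr (hzμ i)
  have hzε' : ∀ j, z - ε j ≠ 0 := fun j => sub_ne_zero.mpr (hzε j)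
  have hεμ' : ∀ j i, ε j - μ i ≠ 0 :=
    fun j i => sub_ne_zero.mpr fun h => hμε i j h.symm
  have hμε' : ∀ i j, μ i - ε j ≠ 0 := fun i j => sub_ne_zero.mpr (hμε i j)
  have hμμ : ∀ i k : Fin M, i ≠ k → μ i - μ k ≠ 0 :=
    fun i k h => sub_ne_zero.mpr fun e => h (hμ e)
  -- rearranged Bethe equations
  have hB : ∀ i, ∑ k ∈ Finset.univ.erase i, 1 / (μ i - μ k)
      = -((2 * μ i - ω) / g ^ 2 - ∑ j, hbar * s j / (μ i - ε j)) / hbar := by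
    intro i
    have h := bethe i
    rw [ha] at h
    have hsum : ∑ k ∈ Finset.univ.erase i, hbar / (μ i - μ k)
        = hbar * ∑ k ∈ Finset.univ.erase i, 1 / (μ i - μ k) := by
      rw [Finset.mul_sum]
      exact Finset.sum_congr rfl fun k _ => by rw [mul_one_div]
    rw [hsum] at h
    rw [eq_div_iff hhbar]
    linear_combination h
  -- Step 1 : the first two terms of LHS
  have hT : -∑ i, 1 / (z - μ i) ^ 2 + (S z) ^ 2
      = ∑ i, 2 * (1 / (z - μ i)) * ∑ k ∈ Finset.univ.erase i, 1 / (μ i - μ k) := by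
    have h1 : S z ^ 2 = ∑ i, ∑ k, (1 / (z - μ i)) * (1 / (z - μ k)) := by
      rw [hS, sq, Finset.sum_mul_sum]
    have h2 : ∀ i : Fin M, ∑ k, (1 / (z - μ i)) * (1 / (z - μ k))
        = 1 / (z - μ i) ^ 2
          + ∑ k ∈ Finset.univ.erase i, (1 / (z - μ i)) * (1 / (z - μ k)) := by
      intro i
      rw [← Finset.add_sum_erase _ _ (Finset.mem_univ i)]
      congr 1
      rw [div_mul_div_comm, one_mul, ← sq]
    have h3 : ∀ i : Fin M, ∀ k ∈ Finset.univ.erase i,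
        (1 / (z - μ i)) * (1 / (z - μ k))
          = (1 / (μ i - μ k)) * (1 / (z - μ i))
            + (1 / (μ k - μ i)) * (1 / (z - μ k)) := by
      intro i k hk
      have hik : i ≠ k := fun h => (Finset.mem_erase.mp hk).1 h.symm
      field_simp [hzμ' i, hzμ' k, hμμ i k hik, hμμ k i hik.symm]
      ring
    rw [h1, Finset.sum_congr rfl fun i _ => h2 i, Finset.sum_add_distrib,
      neg_add_cancel_left]
    rw [Finset.sum_congr rfl fun i _ => Finset.sum_congr rfl (h3 i),
      Finset.sum_congr rfl fun i (_ : i ∈ Finset.univ) => Finset.sum_add_distrib,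
      Finset.sum_add_distrib]
    rw [sum_erase_comm (fun a b => 1 / (μ b - μ a) * (1 / (z - μ b)))]
    rw [← Finset.sum_add_distrib]
    refine Finset.sum_congr rfl fun i _ => ?_
    rw [← Finset.sum_mul]
    ring
  -- Step 2 : the remaining term of LHS
  have hC : (2 / (hbar * g ^ 2)) * ((2 * z - ω) * S z - 2 * M)
      = ∑ i, (2 / (hbar * g ^ 2)) * ((2 * z - ω) * (1 / (z - μ i)) - 2) := by
    rw [hS, ← Finset.mul_sum]
    congr 1
    rw [Finset.sum_sub_distrib, ← Finset.mul_sum]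
    simp [Finset.card_univ, mul_comm]
  -- Step 3 : LHS as a double sum
  have hL : -∑ i, 1 / (z - μ i) ^ 2 + (S z) ^ 2
        + (2 / (hbar * g ^ 2)) * ((2 * z - ω) * S z - 2 * M)
      = ∑ i, ∑ j, 2 * s j / ((z - μ i) * (μ i - ε j)) := by
    rw [hT, hC, ← Finset.sum_add_distrib]
    refine Finset.sum_congr rfl fun i _ => ?_
    rw [hB i]
    have hYi : 2 * (1 / (z - μ i)) * ((∑ j, hbar * s j / (μ i - ε j)) / hbar)
        = ∑ j, 2 * s j / ((z - μ i) * (μ i - ε j)) := by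
      rw [Finset.sum_div, Finset.mul_sum]
      refine Finset.sum_congr rfl fun j _ => ?_
      field_simp [hhbar, hzμ' i, hμε' i j]
    have hrest : 2 * (1 / (z - μ i)) * (-(((2 * μ i - ω) / g ^ 2) / hbar))
        + (2 / (hbar * g ^ 2)) * ((2 * z - ω) * (1 / (z - μ i)) - 2) = 0 := by
      field_simp [hhbar, hg, hzμ' i]
      ring
    linear_combination hYi + hrest
  rw [hL]
  -- Step 4 : RHS as the same double sum
  rw [Finset.sum_comm]
  refine Finset.sum_congr rfl fun j _ => ?_
  rw [hS, hS, ← Finset.sum_sub_distrib, Finset.mul_sum, Finset.sum_div]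
  refine Finset.sum_congr rfl fun i _ => ?_
  field_simp [hzμ' i, hzε' j, hεμ' j i, hμε' i j]
  ring
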